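/- Let B be a balanced bipartite graph with parts V1, V2 of size n each (n odd), minimum degree at least (n+1)/2, and at most one vertex of degree exactly (n+1)/2 in each part. For every vertex subset S of size n + 2 with |S ∩ V2| = k where 2 ≤ k ≤ (n+1)/2, the number of edges of B inside S is at least (n+1)/2 + 2 − k + (k−1)((n+1)/2 + 3 − k), which is at least n + 2. -/

import Mathlib

open Finset SimpleGraph

theorem stmt19 {V : Type} [Fintype V] [DecidableEq V] (G : SimpleGraph V)
    [DecidableRel G.Adj] (n : ℕ) (hodd : Odd n) (V1 V2 : Finset V)
    (hdisj : Disjoint V1 V2) (hunion : V1 ∪ V2 = Finset.univ)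
    (hc1 : V1.card = n) (hc2 : V2.card = n)
    (hbip : ∀ u v, G.Adj u v → (u ∈ V1 ∧ v ∈ V2) ∨ (u ∈ V2 ∧ v ∈ V1))
    (hdeg : ∀ v, n + 1 ≤ 2 * G.degree v)
    (hfew1 : (V1.filter fun v => 2 * G.degree v = n + 1).card ≤ 1)
    (hfew2 : (V2.filter fun v => 2 * G.degree v = n + 1).card ≤ 1)
    (S : Finset V) (hS : S.card = n + 2) (k : ℕ) (hk : (S ∩ V2).card = k)
    (hk2 : 2 ≤ k) (hk3 : 2 * k ≤ n + 1) :
    ((n + 1) / 2 + 2 - k + (k - 1) * ((n + 1) / 2 + 3 - k) ≤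
        ((G.induce (S : Set V)).edgeSet).ncard) ∧
      n + 2 ≤ (n + 1) / 2 + 2 - k + (k - 1) * ((n + 1) / 2 + 3 - k) := by
  classical
  set m := (n + 1) / 2 with hm_def
  have hm : 2 * m = n + 1 := by
    obtain ⟨t, rfl⟩ := hodd
    omega
  have hkm : k ≤ m := by omega
  set a := m + 2 - k with ha_def
  set b := k - 1 with hb_def
  have hab : a + b = m + 1 := by omega
  have hb1 : 1 ≤ b := by omega
  have ha2 : 2 ≤ a := by omega
  -- rewrite the target quantity
  have htarget : m + 2 - k + (k - 1) * (m + 3 - k) = a + b * (a + 1) := by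
    have : m + 3 - k = a + 1 := by omega
    rw [this]
  -- card of S ∩ V1
  have hSV1 : (S ∩ V1).card = n + 2 - k := by
    have h1 : (S ∩ V1) ∪ (S ∩ V2) = S := by
      rw [← Finset.inter_union_distrib_left, hunion, Finset.inter_univ]
    have h2 : Disjoint (S ∩ V1) (S ∩ V2) :=
      hdisj.mono Finset.inter_subset_right Finset.inter_subset_right
    have h3 := Finset.card_union_of_disjoint h2
    rw [h1] at h3
    omega
  -- the fiber bound
  have hfiber : ∀ v ∈ S ∩ V2,
      G.degree v ≤ ((S ∩ V1).filter (fun u => G.Adj v u)).card + (k - 2) := by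
    intro v hv
    have hv2 : v ∈ V2 := (Finset.mem_inter.mp hv).2
    have hnb : G.neighborFinset v ⊆ V1 := by
      intro u hu
      rw [SimpleGraph.mem_neighborFinset] at hu
      rcases hbip v u hu with ⟨h1, _⟩ | ⟨_, h2⟩
      · exact absurd hv2 (Finset.disjoint_left.mp hdisj h1)
      · exact h2
    have hsub : G.neighborFinset v ⊆
        ((S ∩ V1).filter (fun u => G.Adj v u)) ∪ (V1 \ (S ∩ V1)) := by
      intro u hu
      have hu1 : u ∈ V1 := hnb hu
      rw [SimpleGraph.mem_neighborFinset] at hu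
      by_cases hus : u ∈ S ∩ V1
      · exact Finset.mem_union_left _ (Finset.mem_filter.mpr ⟨hus, hu⟩)
      · exact Finset.mem_union_right _ (Finset.mem_sdiff.mpr ⟨hu1, hus⟩)
    have hcard1 : (V1 \ (S ∩ V1)).card = k - 2 := by
      rw [Finset.card_sdiff_of_subset Finset.inter_subset_right, hSV1, hc1]
      omega
    calc G.degree v = (G.neighborFinset v).card :=
          (G.card_neighborFinset_eq_degree v).symm
      _ ≤ (((S ∩ V1).filter (fun u => G.Adj v u)) ∪ (V1 \ (S ∩ V1))).card :=
          Finset.card_le_card hsub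
      _ ≤ ((S ∩ V1).filter (fun u => G.Adj v u)).card + (V1 \ (S ∩ V1)).card :=
          Finset.card_union_le _ _
      _ = ((S ∩ V1).filter (fun u => G.Adj v u)).card + (k - 2) := by rw [hcard1]
  -- the sum bound
  set W := S ∩ V2 with hW_def
  set T := W.filter (fun v => 2 * G.degree v = n + 1) with hT_def
  have hTW : T ⊆ W := Finset.filter_subset _ _
  have hT1 : T.card ≤ 1 := by
    refine le_trans (Finset.card_le_card ?_) hfew2
    intro v hv
    rw [hT_def, Finset.mem_filter] at hv
    exact Finset.mem_filter.mpr ⟨(Finset.mem_inter.mp hv.1).2, hv.2⟩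
  have hsum : a + b * (a + 1) ≤ ∑ v ∈ W, ((S ∩ V1).filter (fun u => G.Adj v u)).card := by
    have hsplit : ∑ v ∈ W, ((S ∩ V1).filter (fun u => G.Adj v u)).card =
        (∑ v ∈ W \ T, ((S ∩ V1).filter (fun u => G.Adj v u)).card) +
          ∑ v ∈ T, ((S ∩ V1).filter (fun u => G.Adj v u)).card := by
      rw [← Finset.sum_union (Finset.sdiff_disjoint), Finset.sdiff_union_of_subset hTW]
    have hlow1 : ∀ v ∈ W \ T, a + 1 ≤ ((S ∩ V1).filter (fun u => G.Adj v u)).card := by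
      intro v hv
      obtain ⟨hvW, hvT⟩ := Finset.mem_sdiff.mp hv
      have h1 := hfiber v hvW
      have h2 := hdeg v
      have h3 : 2 * G.degree v ≠ n + 1 := by
        intro h
        exact hvT (Finset.mem_filter.mpr ⟨hvW, h⟩)
      omega
    have hlow2 : ∀ v ∈ T, a ≤ ((S ∩ V1).filter (fun u => G.Adj v u)).card := by
      intro v hv
      have h1 := hfiber v (hTW hv)
      have h2 := hdeg v
      omega
    have hb1' := Finset.card_nsmul_le_sum (W \ T) _ (a + 1) hlow1
    have hb2' := Finset.card_nsmul_le_sum T _ a hlow2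
    rw [smul_eq_mul] at hb1' hb2'
    have hcWT : (W \ T).card = k - T.card := by
      rw [Finset.card_sdiff_of_subset hTW, hk]
    rw [hsplit]
    have hc : T.card = 0 ∨ T.card = 1 := by omega
    rcases hc with hc | hc
    · rw [hc] at hcWT
      have : (k - 0) * (a + 1) = (b + 1) * (a + 1) := by
        congr 1; omega
      rw [hcWT, this] at hb1'
      nlinarith
    · rw [hc] at hcWT
      have : (k - 1) * (a + 1) = b * (a + 1) := by rw [hb_def]
      rw [hcWT, this] at hb1'
      rw [hc, one_mul] at hb2'
      omega
  -- count via pairs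
  set F : Finset (V × V) := (W ×ˢ (S ∩ V1)).filter (fun p => G.Adj p.1 p.2) with hF_def
  have hFcard : F.card = ∑ v ∈ W, ((S ∩ V1).filter (fun u => G.Adj v u)).card := by
    rw [hF_def]
    rw [Finset.card_eq_sum_card_fiberwise
      (f := Prod.fst) (t := W) (fun p hp => (Finset.mem_product.mp (Finset.mem_filter.mp hp).1).1)]
    refine Finset.sum_congr rfl (fun v hv => ?_)
    apply Finset.card_bij (fun p _ => p.2)
    · intro p hp
      simp only [Finset.mem_filter, Finset.mem_product] at hp
      obtain ⟨⟨⟨_, hp2⟩, hadj⟩, hfst⟩ := hp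
      subst hfst
      exact Finset.mem_filter.mpr ⟨hp2, hadj⟩
    · intro p hp q hq h
      simp only [Finset.mem_filter] at hp hq
      exact Prod.ext (hp.2.trans hq.2.symm) h
    · intro u hu
      rw [Finset.mem_filter] at hu
      refine ⟨(v, u), ?_, rfl⟩
      simp only [Finset.mem_filter, Finset.mem_product]
      exact ⟨⟨⟨hv, hu.1⟩, hu.2⟩, trivial⟩
  -- injection into the edge set of the induced graph
  haveI : DecidableRel (G.induce (S : Set V)).Adj := fun x y =>
    inferInstanceAs (Decidable (G.Adj x.val y.val))
  obtain ⟨x0, hx0⟩ := Finset.card_pos.mp (show 0 < S.card by omega)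
  have hx0' : x0 ∈ (S : Set V) := hx0
  have hinj : F.card ≤ (G.induce (S : Set V)).edgeFinset.card := by
    apply Finset.card_le_card_of_injOn
      (fun p => if h : p.1 ∈ (S : Set V) ∧ p.2 ∈ (S : Set V)
        then s(⟨p.1, h.1⟩, ⟨p.2, h.2⟩) else s(⟨x0, hx0'⟩, ⟨x0, hx0'⟩))
    · intro p hp
      rw [hF_def, Finset.mem_coe, Finset.mem_filter, Finset.mem_product] at hp
      obtain ⟨⟨hp1, hp2⟩, hadj⟩ := hp
      have h1 : p.1 ∈ (S : Set V) := (Finset.mem_inter.mp hp1).1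
      have h2 : p.2 ∈ (S : Set V) := (Finset.mem_inter.mp hp2).1
      simp only [Finset.mem_coe]
      rw [dif_pos ⟨h1, h2⟩]
      rw [SimpleGraph.mem_edgeFinset, SimpleGraph.mem_edgeSet]
      exact hadj
    · intro p hp q hq heq
      simp only [Finset.mem_coe, hF_def, Finset.mem_filter, Finset.mem_product] at hp hq
      obtain ⟨⟨hp1, hp2⟩, hpadj⟩ := hp
      obtain ⟨⟨hq1, hq2⟩, hqadj⟩ := hq
      have h1 : p.1 ∈ (S : Set V) := (Finset.mem_inter.mp hp1).1
      have h2 : p.2 ∈ (S : Set V) := (Finset.mem_inter.mp hp2).1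
      have h3 : q.1 ∈ (S : Set V) := (Finset.mem_inter.mp hq1).1
      have h4 : q.2 ∈ (S : Set V) := (Finset.mem_inter.mp hq2).1
      simp only at heq
      rw [dif_pos ⟨h1, h2⟩, dif_pos ⟨h3, h4⟩, Sym2.eq_iff] at heq
      rcases heq with ⟨e1, e2⟩ | ⟨e1, e2⟩
      · exact Prod.ext (congrArg Subtype.val e1) (congrArg Subtype.val e2)
      · exfalso
        have hv2 : p.1 ∈ V2 := (Finset.mem_inter.mp hp1).2
        have hv1 : q.2 ∈ V1 := (Finset.mem_inter.mp hq2).2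
        have : p.1 = q.2 := congrArg Subtype.val e1
        rw [this] at hv2
        exact Finset.disjoint_left.mp hdisj hv1 hv2
  have hncard : ((G.induce (S : Set V)).edgeSet).ncard =
      (G.induce (S : Set V)).edgeFinset.card := by
    rw [SimpleGraph.edgeFinset]
    exact Set.ncard_eq_toFinset_card' _
  constructor
  · rw [hncard, htarget]
    calc a + b * (a + 1) ≤ F.card := by rw [hFcard]; exact hsum
      _ ≤ _ := hinj
  · rw [htarget]
    obtain ⟨c, hc⟩ : ∃ c, b = c + 1 := ⟨b - 1, by omega⟩
    have hac : a + c + 1 = m + 1 := by omega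
    have h1 : c * 1 ≤ c * a := Nat.mul_le_mul_left _ (by omega)
    rw [mul_one] at h1
    have h2 : (c + 1) * (a + 1) = c * a + c + a + 1 := by ring
    rw [hc, h2]
    linarith [h1, hac, hm]
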